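/- Let g_1, g_2 be nonsingular upper triangular binary morphisms on X = {a,b} with g_1(a) = g_2(a) = a. If there are positive integers m, n such that g_1^n(b) and g_2^m(b) are a-conjugates, then g_1^n g_2^m = g_2^m g_1^n. -/

import Mathlib

/-- Words over the binary alphabet: `false` is the letter `a`, `true` is the letter `b`. -/
abbrev Word := List Bool

/-- The morphism of the free monoid determined by the images `g` of the letters. -/
def applyG (g : Bool → Word) (w : Word) : Word := w.flatMap g

/-- `a^n`. -/
def rep (n : ℕ) : Word := List.replicate n false

/-- `b a^{α 1} b a^{α 2} ⋯ b a^{α (p-1)} b`, a word with `p` occurrences of `b`. -/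
def blockWord (p : ℕ) (α : ℕ → ℕ) : Word :=
  ((List.range (p - 1)).flatMap fun i => true :: rep (α (i + 1))) ++ [true]

/-- `w^k`. -/
def wordPow (w : Word) (k : ℕ) : Word := (List.replicate k w).flatten

/-- `u` and `v` are `a`-conjugates. -/
def AConj (u v : Word) : Prop :=
  ∃ p q r s : ℕ, ∃ w : Word,
    u = rep p ++ w ++ rep q ∧ v = rep r ++ w ++ rep s ∧ p + q = r + s

/-- `w` is the infinite word `ω(g)`: for every `n`, the word obtained from `g^n(b)` by deleting
all occurrences of `a` preceding the first occurrence of `b` is a prefix of `w`. -/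
def IsOmega (g : Bool → Word) (w : ℕ → Bool) : Prop :=
  ∀ n k : ℕ, ∀ hk : k < (((applyG g)^[n] [true]).dropWhile (fun x => !x)).length,
    (((applyG g)^[n] [true]).dropWhile (fun x => !x)).get ⟨k, hk⟩ = w k

/-- `Aw w i` (for `i ≥ 1`): the number of occurrences of `a` in `w` strictly between the
`i`-th and `(i+1)`-th occurrences of `b` in `w`. -/
noncomputable def Aw (w : ℕ → Bool) (i : ℕ) : ℕ :=
  Nat.nth (fun n => w n = true) i - Nat.nth (fun n => w n = true) (i - 1) - 1

section Aux

lemma applyG_append (g : Bool → Word) (x y : Word) :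
    applyG g (x ++ y) = applyG g x ++ applyG g y := by
  simp [applyG]

lemma iter_append (g : Bool → Word) (n : ℕ) (x y : Word) :
    (applyG g)^[n] (x ++ y) = (applyG g)^[n] x ++ (applyG g)^[n] y := by
  induction n generalizing x y with
  | zero => simp
  | succ n ih => simp [Function.iterate_succ_apply, applyG_append, ih]

lemma iter_a (g : Bool → Word) (h : g false = [false]) (n : ℕ) :
    (applyG g)^[n] [false] = [false] := by
  induction n with
  | zero => simp
  | succ n ih =>
    rw [Function.iterate_succ_apply]
    have : applyG g [false] = [false] := by simp [applyG, h]
    rw [this, ih]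

lemma iter_rep (g : Bool → Word) (h : g false = [false]) (n k : ℕ) :
    (applyG g)^[n] (rep k) = rep k := by
  induction k with
  | zero =>
    have : rep 0 = ([] : Word) := rfl
    rw [this]
    induction n with
    | zero => simp
    | succ n ih => rw [Function.iterate_succ_apply]; simp [applyG, ih]
  | succ k ih =>
    have : rep (k + 1) = [false] ++ rep k := by simp [rep, List.replicate_succ]
    rw [this, iter_append, iter_a g h, ih]

lemma rep_add (x y : ℕ) : rep x ++ rep y = rep (x + y) := by
  simp [rep, ← List.replicate_add]

lemma key (g₁ g₂ : Bool → Word) (h₁a : g₁ false = [false]) (h₂a : g₂ false = [false])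
    (m n p q r s : ℕ) (w₀ : Word)
    (hu : (applyG g₁)^[n] [true] = rep p ++ w₀ ++ rep q)
    (hv : (applyG g₂)^[m] [true] = rep r ++ w₀ ++ rep s)
    (hpq : p + q = r + s) :
    ∀ w : Word, ∀ x z : ℕ, x + s = z + q →
      rep x ++ (applyG g₁)^[n] w ++ rep s = rep z ++ (applyG g₂)^[m] w ++ rep q := by
  intro w
  induction w with
  | nil =>
    intro x z h
    have e1 : (applyG g₁)^[n] ([] : Word) = [] := by
      have := iter_rep g₁ h₁a n 0; simpa [rep] using this
    have e2 : (applyG g₂)^[m] ([] : Word) = [] := by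
      have := iter_rep g₂ h₂a m 0; simpa [rep] using this
    rw [e1, e2]
    simp only [List.append_nil, rep_add, h]
  | cons c w' ih =>
    intro x z h
    have hc1 : (applyG g₁)^[n] (c :: w') = (applyG g₁)^[n] [c] ++ (applyG g₁)^[n] w' := by
      rw [← iter_append]; rfl
    have hc2 : (applyG g₂)^[m] (c :: w') = (applyG g₂)^[m] [c] ++ (applyG g₂)^[m] w' := by
      rw [← iter_append]; rfl
    rw [hc1, hc2]
    cases c with
    | false =>
      rw [iter_a g₁ h₁a, iter_a g₂ h₂a]
      have hx : rep x ++ [false] = rep (x + 1) := by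
        exact rep_add x 1
      have hz : rep z ++ [false] = rep (z + 1) := by
        exact rep_add z 1
      calc rep x ++ ([false] ++ (applyG g₁)^[n] w') ++ rep s
          = rep (x+1) ++ (applyG g₁)^[n] w' ++ rep s := by
            rw [← hx]; simp [List.append_assoc]
        _ = rep (z+1) ++ (applyG g₂)^[m] w' ++ rep q := ih (x+1) (z+1) (by omega)
        _ = rep z ++ ([false] ++ (applyG g₂)^[m] w') ++ rep q := by
            rw [← hz]; simp [List.append_assoc]
    | true =>
      rw [hu, hv]
      have inner := ih q s (by omega)
      have hxz : x + p = z + r := by omega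
      calc rep x ++ ((rep p ++ w₀ ++ rep q) ++ (applyG g₁)^[n] w') ++ rep s
          = rep (x+p) ++ (w₀ ++ (rep q ++ (applyG g₁)^[n] w' ++ rep s)) := by
            rw [← rep_add]; simp [List.append_assoc]
        _ = rep (z+r) ++ (w₀ ++ (rep s ++ (applyG g₂)^[m] w' ++ rep q)) := by
            rw [hxz, inner]
        _ = rep z ++ ((rep r ++ w₀ ++ rep s) ++ (applyG g₂)^[m] w') ++ rep q := by
            rw [← rep_add]; simp [List.append_assoc]

end Aux

/-- for nonsingular upper triangular `g₁`, `g₂` with `g₁(a)=g₂(a)=a`, if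
`g₁^n(b)` and `g₂^m(b)` are `a`-conjugates for some positive `m`, `n`, then `g₁^n` and
`g₂^m` commute. -/
theorem stmt19 (g₁ g₂ : Bool → Word)
    (h₁a : g₁ false = [false]) (h₂a : g₂ false = [false])
    (h₁ns : 0 < (g₁ true).count true) (h₂ns : 0 < (g₂ true).count true)
    (m n : ℕ) (hm : 0 < m) (hn : 0 < n)
    (hconj : AConj ((applyG g₁)^[n] [true]) ((applyG g₂)^[m] [true])) :
    (applyG g₁)^[n] ∘ (applyG g₂)^[m] = (applyG g₂)^[m] ∘ (applyG g₁)^[n] := by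
  obtain ⟨p, q, r, s, w₀, hu, hv, hpq⟩ := hconj
  have main : ∀ w : Word, (applyG g₁)^[n] ((applyG g₂)^[m] w)
      = (applyG g₂)^[m] ((applyG g₁)^[n] w) := by
    intro w
    induction w with
    | nil =>
      have e1 : (applyG g₁)^[n] ([] : Word) = [] := by
        have := iter_rep g₁ h₁a n 0; simpa [rep] using this
      have e2 : (applyG g₂)^[m] ([] : Word) = [] := by
        have := iter_rep g₂ h₂a m 0; simpa [rep] using this
      rw [e1, e2, e1]
    | cons c w' ih =>
      have hc1 : ∀ v : Word, (applyG g₁)^[n] (c :: v)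
          = (applyG g₁)^[n] [c] ++ (applyG g₁)^[n] v := by
        intro v; rw [← iter_append]; rfl
      have hc2 : ∀ v : Word, (applyG g₂)^[m] (c :: v)
          = (applyG g₂)^[m] [c] ++ (applyG g₂)^[m] v := by
        intro v; rw [← iter_append]; rfl
      rw [hc1, hc2, iter_append, iter_append, ih]
      congr 1
      cases c with
      | false => rw [iter_a g₂ h₂a, iter_a g₁ h₁a, iter_a g₂ h₂a]
      | true =>
        rw [hu, hv, iter_append, iter_append, iter_append, iter_append,
          iter_rep g₁ h₁a, iter_rep g₁ h₁a, iter_rep g₂ h₂a, iter_rep g₂ h₂a]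
        exact key g₁ g₂ h₁a h₂a m n p q r s w₀ hu hv hpq w₀ r p (by omega)
  funext w
  exact main w
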